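/- Let G be a finite group and l : G → ℝ a conjugation-invariant length function with l(e)=0, and suppose the coefficients p_i(t) defined by Σ_i p_i(t) χ_i(g) = exp(-t·l(g)) for all g ∈ G (where χ_i runs over the irreducible characters of G) satisfy p_i(t) ≥ 0 for all i and all 0 ≤ t ≤ ε for some ε > 0. Then p_i(t) ≥ 0 for all i and all t ≥ 0. -/

import Mathlib

open scoped BigOperators
open CategoryTheory

/-- `χ` is the character of some irreducible complex representation of `G`. -/
def IsIrredChar (G : Type) [Group G] (χ : G → ℂ) : Prop :=
  ∃ V : FDRep ℂ G, Simple V ∧ χ = fun g => V.character g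

section Aux

open FDRep Module MonoidalCategory

variable {G : Type} [Group G] [Fintype G]

/-- The trivial representation has constant character 1. -/
lemma exists_trivial_char : ∃ W : FDRep ℂ G, ∀ g : G, W.character g = 1 := by
  refine ⟨of (Representation.trivial ℂ (G := G) (V := ℂ)), fun g => ?_⟩
  show LinearMap.trace ℂ _ _ = 1
  rw [show (of (Representation.trivial ℂ (G := G) (V := ℂ))).ρ g = LinearMap.id from rfl]
  simp

/-- A product of characters is a character of some (tensor product) representation. -/
lemma exists_prod_char (m : ℕ) (χ : Fin m → G → ℂ)
    (hirr : ∀ i, IsIrredChar G (χ i)) :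
    ∀ (n : ℕ) (f : Fin n → Fin m), ∃ W : FDRep ℂ G,
      ∀ g : G, W.character g = ∏ k, χ (f k) g := by
  intro n
  induction n with
  | zero =>
    intro f
    obtain ⟨W, hW⟩ := exists_trivial_char (G := G)
    exact ⟨W, fun g => by simp [hW g]⟩
  | succ n ih =>
    intro f
    obtain ⟨W, hW⟩ := ih (fun k => f k.succ)
    obtain ⟨Vf, _, hVf⟩ := hirr (f 0)
    refine ⟨Vf ⊗ W, fun g => ?_⟩
    rw [char_tensor, Pi.mul_apply, hW g, Fin.prod_univ_succ, hVf]

/-- `⅟|G| ∑ χ_W(g) χ_V(g⁻¹)` is a natural number for representations `W`, `V`. -/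
lemma exists_nat_avg (W V : FDRep ℂ G) :
    ∃ d : ℕ, ⅟ (Fintype.card G : ℂ) • ∑ g : G, W.character g * V.character g⁻¹ = d := by
  letI : Invertible (Fintype.card G : ℂ) :=
    invertibleOfNonzero (Nat.cast_ne_zero.mpr Fintype.card_ne_zero)
  refine ⟨finrank ℂ (Representation.linHom V.ρ W.ρ).invariants, ?_⟩
  simp_rw [show ∀ g : G, W.character g * V.character g⁻¹
      = (of (Representation.linHom V.ρ W.ρ)).character g from fun g => by
    rw [char_linHom, mul_comm]]
  letI : Invertible (Nat.card G : ℂ) :=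
    invertibleOfNonzero (Nat.cast_ne_zero.mpr Nat.card_pos.ne')
  rw [smul_eq_mul, invOf_eq_inv, ← Nat.card_eq_fintype_card]
  exact average_char_eq_finrank_invariants _

open scoped Classical in
lemma orthonormal_irred (V W : FDRep ℂ G) [Simple V] [Simple W] :
    ⅟ (Fintype.card G : ℂ) • ∑ g : G, V.character g * W.character g⁻¹ =
      if Nonempty (V ≅ W) then 1 else 0 := by
  letI : Invertible (Fintype.card G : ℂ) :=
    invertibleOfNonzero (Nat.cast_ne_zero.mpr Fintype.card_ne_zero)
  letI : Invertible (Nat.card G : ℂ) :=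
    invertibleOfNonzero (Nat.cast_ne_zero.mpr Nat.card_pos.ne')
  have h := char_orthonormal (k := ℂ) (G := G) V W
  rw [smul_eq_mul, invOf_eq_inv, ← Nat.card_eq_fintype_card]
  convert h using 2

end Aux

theorem stmt3 {G : Type} [Group G] [Fintype G] (m : ℕ)
    (χ : Fin m → G → ℂ)
    (hirr : ∀ i, IsIrredChar G (χ i))
    (hinj : Function.Injective χ)
    (hcomplete : ∀ ψ : G → ℂ, IsIrredChar G ψ → ∃ i, ψ = χ i)
    (l : G → ℝ) (hclass : ∀ g h : G, l (h⁻¹ * g * h) = l g) (hl0 : l 1 = 0)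
    (p : Fin m → ℝ → ℝ)
    (hdecomp : ∀ (t : ℝ) (g : G),
      (∑ i, (p i t : ℂ) * χ i g) = (Real.exp (-t * l g) : ℂ))
    (ε : ℝ) (hε : 0 < ε)
    (hpos : ∀ i, ∀ t : ℝ, 0 ≤ t → t ≤ ε → 0 ≤ p i t) :
    ∀ i, ∀ t : ℝ, 0 ≤ t → 0 ≤ p i t := by
  classical
  letI : Invertible (Fintype.card G : ℂ) :=
    invertibleOfNonzero (Nat.cast_ne_zero.mpr Fintype.card_ne_zero)
  set c : ℂ := ⅟ (Fintype.card G : ℂ) with hc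
  -- choose irreducible representations realizing the characters
  choose V hVsimple hVchar using hirr
  haveI : ∀ i, Simple (V i) := hVsimple
  -- orthonormality of the χ i
  have horth : ∀ i j : Fin m,
      c * ∑ g : G, χ i g * χ j g⁻¹ = if i = j then 1 else 0 := by
    intro i j
    have h := orthonormal_irred (V i) (V j)
    simp_rw [← congrFun (hVchar i), ← congrFun (hVchar j), smul_eq_mul] at h
    rw [hc, h]
    congr 1
    simp only [eq_iff_iff]
    constructor
    · rintro ⟨e⟩
      apply hinj
      rw [hVchar i, hVchar j, FDRep.char_iso e]
    · rintro rfl; exact ⟨Iso.refl _⟩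
  -- extraction of coefficients
  have hextract : ∀ t : ℝ, ∀ j : Fin m,
      (p j t : ℂ) = c * ∑ g : G, (Real.exp (-t * l g) : ℂ) * χ j g⁻¹ := by
    intro t j
    have h1 : ∑ g : G, (Real.exp (-t * l g) : ℂ) * χ j g⁻¹
        = ∑ i : Fin m, (p i t : ℂ) * ∑ g : G, χ i g * χ j g⁻¹ := by
      simp_rw [← hdecomp t, Finset.sum_mul, Finset.mul_sum]
      rw [Finset.sum_comm]
      refine Finset.sum_congr rfl fun i _ => Finset.sum_congr rfl fun g _ => by ring
    rw [h1, Finset.mul_sum]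
    have h2 : ∀ i : Fin m, c * ((p i t : ℂ) * ∑ g : G, χ i g * χ j g⁻¹)
        = (p i t : ℂ) * (c * ∑ g : G, χ i g * χ j g⁻¹) := fun i => by ring
    simp_rw [h2, horth, mul_ite, mul_one, mul_zero]
    simp
  intro j t ht
  -- choose n with t / n ∈ [0, ε]
  set n : ℕ := max 1 ⌈t / ε⌉₊ with hn
  have hn1 : 1 ≤ n := le_max_left _ _
  have hnpos : (0 : ℝ) < n := by exact_mod_cast hn1
  set s : ℝ := t / n with hs
  have hs0 : 0 ≤ s := div_nonneg ht hnpos.le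
  have hsε : s ≤ ε := by
    rw [hs, div_le_iff₀ hnpos]
    calc t = (t / ε) * ε := by field_simp
    _ ≤ (⌈t / ε⌉₊ : ℝ) * ε := mul_le_mul_of_nonneg_right (Nat.le_ceil _) hε.le
    _ ≤ (n : ℝ) * ε := by
        apply mul_le_mul_of_nonneg_right _ hε.le
        exact_mod_cast le_max_right _ _
    _ = ε * (n : ℝ) := mul_comm _ _
  have hts : t = n * s := by rw [hs]; field_simp
  -- exp(-t l g) = (∑ p i s χ i g)^n
  have hexp : ∀ g : G, (Real.exp (-t * l g) : ℂ) = (∑ i, (p i s : ℂ) * χ i g) ^ n := by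
    intro g
    rw [hdecomp s g, ← Complex.ofReal_pow, ← Real.exp_nat_mul]
    congr 2
    rw [hts]; ring
  -- expand the power as a sum over functions Fin n → Fin m
  have hpow : ∀ g : G, (∑ i, (p i s : ℂ) * χ i g) ^ n
      = ∑ f ∈ Fintype.piFinset (fun _ : Fin n => (Finset.univ : Finset (Fin m))),
          (∏ k, (p (f k) s : ℂ)) * ∏ k, χ (f k) g := by
    intro g
    rw [← Fin.prod_const n (∑ i, (p i s : ℂ) * χ i g), Finset.prod_univ_sum]
    refine Finset.sum_congr rfl fun f _ => ?_
    rw [← Finset.prod_mul_distrib]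
  -- the natural numbers d f
  have hd : ∀ f : Fin n → Fin m, ∃ e : ℕ,
      c * ∑ g : G, (∏ k, χ (f k) g) * χ j g⁻¹ = e := by
    intro f
    obtain ⟨W, hW⟩ := exists_prod_char m χ (fun i => ⟨V i, hVsimple i, hVchar i⟩) n f
    obtain ⟨e, heq⟩ := exists_nat_avg W (V j)
    refine ⟨e, ?_⟩
    rw [smul_eq_mul] at heq
    simp_rw [hVchar j, ← hW]
    exact heq
  choose d hdspec using hd
  -- main computation
  have hkey : (p j t : ℂ) =
      ∑ f ∈ Fintype.piFinset (fun _ : Fin n => (Finset.univ : Finset (Fin m))),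
        (∏ k, (p (f k) s : ℂ)) * (d f : ℂ) := by
    rw [hextract t j]
    have h2 : ∑ g : G, (Real.exp (-t * l g) : ℂ) * χ j g⁻¹
        = ∑ f ∈ Fintype.piFinset (fun _ : Fin n => (Finset.univ : Finset (Fin m))),
            (∏ k, (p (f k) s : ℂ)) * ∑ g : G, (∏ k, χ (f k) g) * χ j g⁻¹ := by
      simp_rw [hexp, hpow, Finset.sum_mul, Finset.mul_sum]
      rw [Finset.sum_comm]
      refine Finset.sum_congr rfl fun f _ => Finset.sum_congr rfl fun g _ => by ring
    rw [h2, Finset.mul_sum]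
    refine Finset.sum_congr rfl fun f _ => ?_
    rw [← hdspec f]; ring
  -- conclude nonnegativity
  have hreal : (p j t : ℂ) =
      ((∑ f ∈ Fintype.piFinset (fun _ : Fin n => (Finset.univ : Finset (Fin m))),
        (∏ k, p (f k) s) * (d f : ℝ) : ℝ) : ℂ) := by
    rw [hkey]
    push_cast
    rfl
  rw [Complex.ofReal_injective hreal]
  apply Finset.sum_nonneg
  intro f _
  exact mul_nonneg (Finset.prod_nonneg fun k _ => hpos (f k) s hs0 hsε) (Nat.cast_nonneg _)
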